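/- Let m > 2 and n ≥ 1, and let G be the metacyclic group M_{2mn} = ⟨a, b : a^m = b^{2n} = 1, b a b^{-1} = a^{-1}⟩, a group of order 2mn. Then the energy of the commuting graph satisfies E(Γ_{M_{2mn}}) = 4mn − 2m − 2n − 2 if m is odd, and E(Γ_{M_{2mn}}) = 4mn − 4n − m − 2 if m is even. -/

import Mathlib

open scoped Classical

/-- The commuting graph of a group `G`: its vertices are the non-central
elements of `G`, and two distinct vertices are adjacent iff they commute. -/
noncomputable def commGraph (G : Type*) [Group G] :
    SimpleGraph {g : G // g ∉ Subgroup.center G} where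
  Adj x y := x ≠ y ∧ (x : G) * y = (y : G) * x
  symm := ⟨fun _ _ h => ⟨h.1.symm, h.2.symm⟩⟩
  loopless := ⟨fun _ h => h.1 rfl⟩

lemma adjMatrix_isHermitian {V : Type*} [Fintype V] (Γ : SimpleGraph V) :
    (Γ.adjMatrix ℝ).IsHermitian := by
  ext i j
  simp [Matrix.conjTranspose_apply, SimpleGraph.adj_comm]

/-- The energy of a finite graph: the sum of the absolute values of the
eigenvalues of its adjacency matrix. -/
noncomputable def graphEnergy {V : Type*} [Fintype V] (Γ : SimpleGraph V) : ℝ :=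
  ∑ i, |(adjMatrix_isHermitian Γ).eigenvalues i|


open Matrix in
lemma energy_clique_partition {V C : Type*} [Fintype V] [Fintype C]
    (Γ : SimpleGraph V) (q : V → C) (hq : Function.Surjective q)
    (hAdj : ∀ x y, Γ.Adj x y ↔ x ≠ y ∧ q x = q y) :
    graphEnergy Γ = 2 * ((Fintype.card V : ℝ) - Fintype.card C) := by
  classical
  set A : Matrix V V ℝ := Γ.adjMatrix ℝ with hAdef
  have hA : A.IsHermitian := adjMatrix_isHermitian Γ
  set N : Matrix V C ℝ := Matrix.of (fun x c => if q x = c then 1 else 0) with hN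
  set B : Matrix V V ℝ := N * Nᵀ with hBdef
  have hBent : ∀ x y, B x y = if q x = q y then 1 else 0 := by
    intro x y
    simp only [hBdef, Matrix.mul_apply, Matrix.transpose_apply, hN, Matrix.of_apply]
    rw [Finset.sum_eq_single (q x)]
    · by_cases h : q x = q y <;> simp [h, eq_comm]
    · intro c _ hc; simp [Ne.symm hc]
    · simp
  have hBA : B = A + 1 := by
    ext x y
    rw [hBent]
    by_cases hxy : x = y
    · subst hxy; simp [hAdef, Matrix.one_apply]
    · simp only [hAdef, SimpleGraph.adjMatrix_apply, Matrix.add_apply, Matrix.one_apply,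
        if_neg hxy, add_zero, hAdj]
      by_cases h : q x = q y <;> simp [h, hxy]
  have hlam : ∀ i, A *ᵥ ⇑(hA.eigenvectorBasis i) = hA.eigenvalues i • ⇑(hA.eigenvectorBasis i) :=
    hA.mulVec_eigenvectorBasis
  set lam : V → ℝ := hA.eigenvalues with hlamdef
  set v : V → V → ℝ := fun i => ⇑(hA.eigenvectorBasis i) with hvdef
  have hBv : ∀ i, B *ᵥ v i = (lam i + 1) • v i := by
    intro i
    rw [hBA, Matrix.add_mulVec, Matrix.one_mulVec, hlam i, add_smul, one_smul]
  set k : C → ℕ := fun c => (Finset.univ.filter (fun y => q y = c)).card with hk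
  have hkpos : ∀ c, 0 < k c := by
    intro c
    obtain ⟨x, hx⟩ := hq c
    exact Finset.card_pos.2 ⟨x, by simp [hk, hx]⟩
  have hBmul : ∀ (w : V → ℝ) (x : V),
      (B *ᵥ w) x = ∑ y ∈ Finset.univ.filter (fun y => q y = q x), w y := by
    intro w x
    simp only [Matrix.mulVec, dotProduct, Finset.sum_filter]
    apply Finset.sum_congr rfl
    intro y _
    rw [hBent]
    by_cases h : q x = q y
    · rw [if_pos h, if_pos h.symm, one_mul]
    · rw [if_neg h, if_neg (fun hh => h hh.symm), zero_mul]
  -- Step 1 : eigenvalues are -1 or ≥ 0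
  have step1 : ∀ i, lam i = -1 ∨ 0 ≤ lam i := by
    intro i
    by_cases hne : lam i = -1
    · exact Or.inl hne
    · right
      have hmu : lam i + 1 ≠ 0 := fun h => hne (by linarith)
      set S : C → ℝ := fun c => ∑ y ∈ Finset.univ.filter (fun y => q y = c), v i y with hS
      have hvS : ∀ x, (lam i + 1) * v i x = S (q x) := by
        intro x
        have := congrFun (hBv i) x
        rw [hBmul] at this
        simpa [hS, Pi.smul_apply, smul_eq_mul] using this.symm
      have hvx : ∀ x, v i x = (lam i + 1)⁻¹ * S (q x) := by
        intro x
        rw [← hvS x, ← mul_assoc, inv_mul_cancel₀ hmu, one_mul]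
      obtain ⟨x, hx⟩ : ∃ x, v i x ≠ 0 := by
        by_contra h
        push_neg at h
        exact hA.eigenvectorBasis.orthonormal.ne_zero i (by ext y; exact h y)
      have hSx : S (q x) ≠ 0 := by
        intro h
        exact hx (by rw [hvx x, h, mul_zero])
      have hfix : S (q x) = (k (q x) : ℝ) * ((lam i + 1)⁻¹ * S (q x)) := by
        have h1 : ∀ y ∈ Finset.univ.filter (fun y => q y = q x),
            v i y = (lam i + 1)⁻¹ * S (q x) := by
          intro y hy
          rw [hvx y, (Finset.mem_filter.1 hy).2]
        calc S (q x) = ∑ y ∈ Finset.univ.filter (fun y => q y = q x), v i y := rfl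
          _ = ∑ y ∈ Finset.univ.filter (fun y => q y = q x), (lam i + 1)⁻¹ * S (q x) :=
              Finset.sum_congr rfl h1
          _ = (k (q x) : ℝ) * ((lam i + 1)⁻¹ * S (q x)) := by
              rw [Finset.sum_const, nsmul_eq_mul]
      have h1 : (lam i + 1) * S (q x) = (k (q x) : ℝ) * S (q x) := by
        calc (lam i + 1) * S (q x)
            = (lam i + 1) * ((k (q x) : ℝ) * ((lam i + 1)⁻¹ * S (q x))) := by rw [← hfix]
          _ = (k (q x) : ℝ) * ((lam i + 1) * (lam i + 1)⁻¹ * S (q x)) := by ring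
          _ = (k (q x) : ℝ) * S (q x) := by rw [mul_inv_cancel₀ hmu, one_mul]
      have hmueq : lam i + 1 = (k (q x) : ℝ) := mul_right_cancel₀ hSx h1
      have hk1 : (1 : ℝ) ≤ (k (q x) : ℝ) := by exact_mod_cast hkpos (q x)
      linarith
  -- Step 2 : the number of eigenvalues ≠ -1 equals card C
  have hrankB : B.rank = Fintype.card C := by
    have hNtN : Nᵀ * N = Matrix.diagonal (fun c => (k c : ℝ)) := by
      ext c d
      simp only [Matrix.mul_apply, Matrix.transpose_apply, hN, Matrix.of_apply,
        Matrix.diagonal_apply]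
      by_cases h : c = d
      · subst h
        rw [if_pos rfl]
        have h2 : ∀ x : V, ((if q x = c then (1:ℝ) else 0) * (if q x = c then 1 else 0))
            = if q x = c then 1 else 0 := by
          intro x; by_cases hx : q x = c <;> simp [hx]
        rw [Finset.sum_congr rfl (fun x _ => h2 x), ← Finset.sum_filter, Finset.sum_const,
          nsmul_eq_mul, mul_one]
      · rw [if_neg h, Finset.sum_eq_zero]
        intro x _
        by_cases hx : q x = c
        · rw [if_pos hx, if_neg (fun hd => h (hx.symm.trans hd)), mul_zero]
        · rw [if_neg hx, zero_mul]
    have h1 : (Nᵀ * N).rank = Fintype.card C := by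
      rw [hNtN, Matrix.rank_diagonal, Fintype.card_subtype]
      congr 1
      apply Finset.filter_true_of_mem
      intro c _
      exact Nat.cast_ne_zero.2 (hkpos c).ne'
    have h2 : (Nᵀ * N).rank ≤ N.rank := Matrix.rank_mul_le_right _ _
    have h3 : N.rank ≤ Fintype.card C := Matrix.rank_le_card_width N
    have h4 : B.rank = N.rank := Matrix.rank_self_mul_transpose N
    omega
  have hindep : LinearIndependent ℝ v := by
    have h := hA.eigenvectorBasis.toBasis.linearIndependent
    rw [OrthonormalBasis.coe_toBasis] at h
    exact h.map' (WithLp.linearEquiv 2 ℝ (V → ℝ)).toLinearMap (LinearEquiv.ker _)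
  set W := LinearMap.range B.mulVecLin with hW
  set K := LinearMap.ker B.mulVecLin with hK
  have hmemW : ∀ i, ¬ lam i = -1 → v i ∈ W := by
    intro i hi
    have hmu : lam i + 1 ≠ 0 := fun h => hi (by linarith)
    refine ⟨(lam i + 1)⁻¹ • v i, ?_⟩
    rw [_root_.map_smul, Matrix.mulVecLin_apply, hBv i, smul_smul, inv_mul_cancel₀ hmu, one_smul]
  have hmemK : ∀ i, lam i = -1 → v i ∈ K := by
    intro i hi
    rw [hK, LinearMap.mem_ker, Matrix.mulVecLin_apply, hBv i, hi]
    simp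
  have hcard1 : Fintype.card {i // ¬ lam i = -1} ≤ Module.finrank ℝ W := by
    have h : LinearIndependent ℝ (fun i : {i // ¬ lam i = -1} =>
        (⟨v i, hmemW i i.2⟩ : W)) := by
      apply LinearIndependent.of_comp W.subtype
      exact hindep.comp Subtype.val Subtype.val_injective
    exact h.fintype_card_le_finrank
  have hcard2 : Fintype.card {i // lam i = -1} ≤ Module.finrank ℝ K := by
    have h : LinearIndependent ℝ (fun i : {i // lam i = -1} =>
        (⟨v i, hmemK i i.2⟩ : K)) := by
      apply LinearIndependent.of_comp K.subtype
      exact hindep.comp Subtype.val Subtype.val_injective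
    exact h.fintype_card_le_finrank
  have hranknull : Module.finrank ℝ W + Module.finrank ℝ K = Fintype.card V := by
    rw [hW, hK, LinearMap.finrank_range_add_finrank_ker]
    simp [Module.finrank_pi]
  have hsplitcard : Fintype.card {i // ¬ lam i = -1} + Fintype.card {i // lam i = -1}
      = Fintype.card V := by
    have h1 : Fintype.card {i : V // ¬ lam i = -1}
        = Fintype.card V - Fintype.card {i : V // lam i = -1} :=
      Fintype.card_subtype_compl _
    have h2 : Fintype.card {i : V // lam i = -1} ≤ Fintype.card V :=
      Fintype.card_subtype_le _
    omega
  have hrankW : Module.finrank ℝ W = B.rank := rfl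
  have hcount : Fintype.card {i // ¬ lam i = -1} = Fintype.card C := by omega
  -- Step 3 : the trace is the sum of the eigenvalues
  have htrace : ∑ i, lam i = 0 := by
    have h2 : Matrix.trace A = 0 := Γ.trace_adjMatrix ℝ
    have h1 : Matrix.trace A = ∑ i, lam i := by
      conv_lhs => rw [hA.spectral_theorem]
      rw [Unitary.conjStarAlgAut_apply, Matrix.trace_mul_cycle]
      rw [Matrix.mem_unitaryGroup_iff'.mp (hA.eigenvectorUnitary).2, one_mul,
        Matrix.trace_diagonal]
      simp
      rfl
    rw [← h1, h2]
  -- Final computation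
  have hsum : graphEnergy Γ = ∑ i, |lam i| := rfl
  rw [hsum]
  rw [← Finset.sum_filter_add_sum_filter_not Finset.univ (fun i => lam i = -1)]
  have e1 : ∑ i ∈ Finset.univ.filter (fun i => lam i = -1), |lam i|
      = (Fintype.card {i // lam i = -1} : ℝ) := by
    have h : ∀ i ∈ Finset.univ.filter (fun i => lam i = -1), |lam i| = 1 := by
      intro i hi
      rw [(Finset.mem_filter.1 hi).2]
      norm_num
    rw [Finset.sum_congr rfl h, Finset.sum_const, Fintype.card_subtype, nsmul_eq_mul, mul_one]
  have e2 : ∑ i ∈ Finset.univ.filter (fun i => ¬lam i = -1), |lam i|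
      = ∑ i ∈ Finset.univ.filter (fun i => ¬lam i = -1), lam i := by
    apply Finset.sum_congr rfl
    intro i hi
    have hmem := (Finset.mem_filter.1 hi).2
    rcases step1 i with h | h
    · exact absurd h hmem
    · exact abs_of_nonneg h
  have e3 : ∑ i ∈ Finset.univ.filter (fun i => ¬lam i = -1), lam i
      = (Fintype.card {i // lam i = -1} : ℝ) := by
    have hsplit := Finset.sum_filter_add_sum_filter_not Finset.univ (fun i => lam i = -1) lam
    rw [htrace] at hsplit
    have e4 : ∑ i ∈ Finset.univ.filter (fun i => lam i = -1), lam i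
        = -(Fintype.card {i // lam i = -1} : ℝ) := by
      have h : ∀ i ∈ Finset.univ.filter (fun i => lam i = -1), lam i = -1 :=
        fun i hi => (Finset.mem_filter.1 hi).2
      rw [Finset.sum_congr rfl h, Finset.sum_const, Fintype.card_subtype, nsmul_eq_mul,
        mul_neg_one]
    rw [e4] at hsplit
    linarith
  rw [e1, e2, e3]
  have hQ : (Fintype.card {i // lam i = -1} : ℝ)
      = (Fintype.card V : ℝ) - Fintype.card C := by
    have h5 : Fintype.card {i // lam i = -1} = Fintype.card V - Fintype.card C := by omega
    have hle : Fintype.card C ≤ Fintype.card V := by omega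
    rw [h5, Nat.cast_sub hle]
  rw [hQ]
  ring


lemma zpow_eq_pow_val {G : Type*} [Group G] (x : G) (M : ℕ) [NeZero M] (h : x ^ M = 1) (z : ℤ) :
    x ^ z = x ^ ((z : ZMod M)).val := by
  have hmod : (((z : ZMod M).val : ℤ)) = z % M := ZMod.val_intCast z
  calc x ^ z = x ^ ((M : ℤ) * (z / M) + z % M) := by rw [Int.mul_ediv_add_emod]
    _ = (x ^ (M : ℤ)) ^ (z / M) * x ^ (z % M) := by rw [zpow_add, zpow_mul]
    _ = x ^ (z % M) := by rw [zpow_natCast, h, one_zpow, one_mul]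
    _ = x ^ (((z : ZMod M).val : ℤ)) := by rw [hmod]
    _ = x ^ ((z : ZMod M)).val := zpow_natCast x _

lemma card_val_dvd (M d : ℕ) [NeZero M] (hd : 0 < d) (hdM : d ∣ M) :
    Fintype.card {i : ZMod M // d ∣ i.val} = M / d := by
  obtain ⟨k, hk⟩ := hdM
  rw [Fintype.card_subtype]
  have himg : Finset.univ.filter (fun i : ZMod M => d ∣ i.val)
      = Finset.image (fun t : Fin k => ((d * (t : ℕ) : ℕ) : ZMod M)) Finset.univ := by
    ext i
    simp only [Finset.mem_filter, Finset.mem_univ, true_and, Finset.mem_image]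
    constructor
    · rintro ⟨t, ht⟩
      have htk : t < k := by
        have hv := ZMod.val_lt i
        rw [ht, hk] at hv
        exact lt_of_mul_lt_mul_left hv (Nat.zero_le d)
      refine ⟨⟨t, htk⟩, ?_⟩
      show ((d * t : ℕ) : ZMod M) = i
      rw [← ht]
      exact ZMod.natCast_rightInverse i
    · rintro ⟨t, rfl⟩
      have hlt : d * (t : ℕ) < M := by
        rw [hk]
        have := t.isLt
        exact Nat.mul_lt_mul_of_le_of_lt (le_refl d) t.isLt hd
      rw [ZMod.val_natCast_of_lt hlt]
      exact ⟨t, rfl⟩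
  have hinj : Function.Injective (fun t : Fin k => ((d * (t : ℕ) : ℕ) : ZMod M)) := by
    intro t₁ t₂ h
    have h1 : d * (t₁ : ℕ) < M := by rw [hk]; exact Nat.mul_lt_mul_of_le_of_lt (le_refl d) t₁.isLt hd
    have h2 : d * (t₂ : ℕ) < M := by rw [hk]; exact Nat.mul_lt_mul_of_le_of_lt (le_refl d) t₂.isLt hd
    have := congrArg ZMod.val h
    rw [ZMod.val_natCast_of_lt h1, ZMod.val_natCast_of_lt h2] at this
    exact Fin.ext (Nat.eq_of_mul_eq_mul_left hd this)
  rw [himg, Finset.card_image_of_injective _ hinj, Finset.card_univ, Fintype.card_fin,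
    hk, Nat.mul_div_cancel_left _ hd]

/-- The energy of the commuting graph of the metacyclic group
`M_{2mn} = ⟨a, b : a^m = b^(2n) = 1, b a b⁻¹ = a⁻¹⟩` of order `2mn`, `m > 2`. -/
theorem energy_commGraph_metacyclic
    (m n : ℕ) (hm : 2 < m) (hn : 1 ≤ n)
    (G : Type*) [Group G] [Fintype G] (a b : G)
    (ha : a ^ m = 1) (hb : b ^ (2 * n) = 1) (hrel : b * a * b⁻¹ = a⁻¹)
    (hgen : Subgroup.closure ({a, b} : Set G) = ⊤)
    (hcard : Fintype.card G = 2 * m * n) :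
    (Odd m →
      graphEnergy (commGraph G) = 4 * (m : ℝ) * n - 2 * m - 2 * n - 2) ∧
    (Even m →
      graphEnergy (commGraph G) = 4 * (m : ℝ) * n - 4 * n - m - 2) := by
  haveI : NeZero m := ⟨by omega⟩
  haveI : NeZero (2 * n) := ⟨by omega⟩
  haveI : Fact (1 < m) := ⟨by omega⟩
  haveI : Fact (1 < 2 * n) := ⟨by omega⟩
  -- conjugation rule
  have hconj : ∀ z : ℤ, b * a ^ z * b⁻¹ = a ^ (-z) := by
    intro z
    have h := conj_zpow (i := z) (a := b) (b := a)
    rw [hrel] at h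
    rw [← h, inv_zpow, zpow_neg]
  have hswap : ∀ z : ℤ, b * a ^ z = a ^ (-z) * b := by
    intro z
    rw [← hconj z]
    group
  -- commuting with the generators puts you in the centre
  have hcen : ∀ x : G, Commute a x → Commute b x → x ∈ Subgroup.center G := by
    intro x hax hbx
    rw [Subgroup.mem_center_iff]
    intro g
    have hg : g ∈ Subgroup.closure ({a, b} : Set G) := by rw [hgen]; exact Subgroup.mem_top g
    have hcomm : Commute g x := by
      induction hg using Subgroup.closure_induction with
      | mem y hy =>
        rcases hy with h | h
        · subst h; exact hax
        · subst h; exact hbx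
      | one => exact Commute.one_left x
      | mul y z _ _ hy hz => exact hy.mul_left hz
      | inv y _ hy => exact hy.inv_left
    exact hcomm
  -- b² is central
  have hb2c : b ^ (2 : ℤ) ∈ Subgroup.center G := by
    apply hcen
    · show a * b ^ (2 : ℤ) = b ^ (2 : ℤ) * a
      have h2 : b ^ (2:ℤ) = b * b := by
        rw [show (2:ℤ) = 1 + 1 by norm_num, zpow_add, zpow_one]
      have s1 : b * a = a⁻¹ * b := by simpa using hswap 1
      have s2 : b * a⁻¹ = a * b := by simpa using hswap (-1)
      rw [h2]
      calc a * (b * b) = (a * b) * b := by rw [mul_assoc]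
        _ = (b * a⁻¹) * b := by rw [s2]
        _ = b * (a⁻¹ * b) := by rw [mul_assoc]
        _ = b * (b * a) := by rw [← s1]
        _ = b * b * a := by rw [mul_assoc]
    · exact (Commute.refl b).zpow_right 2
  -- sign function
  set eps : ℤ → ℤ := fun j => if Even j then 1 else -1 with heps
  have heps_even : ∀ z : ℤ, Even z → eps z = 1 := fun z hz => if_pos hz
  have heps_odd : ∀ z : ℤ, ¬ Even z → eps z = -1 := fun z hz => if_neg hz
  -- the master commutation rule
  have hbj : ∀ j k : ℤ, b ^ j * a ^ k = a ^ (eps j * k) * b ^ j := by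
    intro j k
    rcases Int.even_or_odd j with he | ho
    · obtain ⟨t, ht⟩ := he
      have hcent : b ^ j ∈ Subgroup.center G := by
        have hbj2 : b ^ j = (b ^ (2:ℤ)) ^ t := by
          rw [← zpow_mul]
          congr 1
          omega
        rw [hbj2]
        exact Subgroup.zpow_mem _ hb2c t
      rw [heps_even j ⟨t, ht⟩, one_mul]
      exact (Subgroup.mem_center_iff.1 hcent (a ^ k)).symm
    · obtain ⟨t, ht⟩ := ho
      have hsplit : b ^ j = (b ^ (2:ℤ)) ^ t * b := by
        have hstep : b ^ j = b ^ (2 * t) * b ^ (1:ℤ) := by rw [← zpow_add, ht]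
        rw [hstep, zpow_one, zpow_mul]
      have hcent : (b ^ (2:ℤ)) ^ t ∈ Subgroup.center G := Subgroup.zpow_mem _ hb2c t
      rw [heps_odd j (Int.not_even_iff_odd.2 ⟨t, ht⟩), hsplit]
      calc (b ^ (2:ℤ)) ^ t * b * a ^ k
          = (b ^ (2:ℤ)) ^ t * (b * a ^ k) := by rw [mul_assoc]
        _ = (b ^ (2:ℤ)) ^ t * (a ^ (-k) * b) := by rw [hswap]
        _ = ((b ^ (2:ℤ)) ^ t * a ^ (-k)) * b := by rw [mul_assoc]
        _ = (a ^ (-k) * (b ^ (2:ℤ)) ^ t) * b := by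
            rw [(Subgroup.mem_center_iff.1 hcent (a ^ (-k)))]
        _ = a ^ (-1 * k) * ((b ^ (2:ℤ)) ^ t * b) := by rw [mul_assoc]; norm_num
  -- every element has a normal form
  have hT : ∀ g : G, ∃ i j : ℤ, g = a ^ i * b ^ j := by
    have hmul' : ∀ i j k l : ℤ, (a ^ i * b ^ j) * (a ^ k * b ^ l)
        = a ^ (i + eps j * k) * b ^ (j + l) := by
      intro i j k l
      calc (a ^ i * b ^ j) * (a ^ k * b ^ l) = a ^ i * (b ^ j * a ^ k) * b ^ l := by group
        _ = a ^ i * (a ^ (eps j * k) * b ^ j) * b ^ l := by rw [hbj]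
        _ = a ^ (i + eps j * k) * b ^ (j + l) := by rw [zpow_add, zpow_add]; group
    let T : Subgroup G :=
      { carrier := {g | ∃ i j : ℤ, g = a ^ i * b ^ j}
        one_mem' := ⟨0, 0, by simp⟩
        mul_mem' := by
          rintro x y ⟨i, j, rfl⟩ ⟨k, l, rfl⟩
          exact ⟨i + eps j * k, j + l, hmul' i j k l⟩
        inv_mem' := by
          rintro x ⟨i, j, rfl⟩
          refine ⟨eps (-j) * (-i), -j, ?_⟩
          rw [← hbj (-j) (-i)]
          group }
    intro g
    have hle : Subgroup.closure ({a, b} : Set G) ≤ T := by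
      rw [Subgroup.closure_le]
      rintro x (rfl | rfl)
      · exact ⟨1, 0, by simp⟩
      · exact ⟨0, 1, by simp⟩
    exact hle (by rw [hgen]; exact Subgroup.mem_top g)
  have hmul' : ∀ i j k l : ℤ, (a ^ i * b ^ j) * (a ^ k * b ^ l)
      = a ^ (i + eps j * k) * b ^ (j + l) := by
    intro i j k l
    calc (a ^ i * b ^ j) * (a ^ k * b ^ l) = a ^ i * (b ^ j * a ^ k) * b ^ l := by group
      _ = a ^ i * (a ^ (eps j * k) * b ^ j) * b ^ l := by rw [hbj]
      _ = a ^ (i + eps j * k) * b ^ (j + l) := by rw [zpow_add, zpow_add]; group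
  -- the coordinate map
  set f : ZMod m × ZMod (2 * n) → G := fun p => a ^ p.1.val * b ^ p.2.val with hf
  have hfsurj : Function.Surjective f := by
    intro g
    obtain ⟨i, j, rfl⟩ := hT g
    refine ⟨((i : ZMod m), (j : ZMod (2 * n))), ?_⟩
    show a ^ ((i : ZMod m)).val * b ^ ((j : ZMod (2 * n))).val = a ^ i * b ^ j
    rw [← zpow_eq_pow_val a m ha i, ← zpow_eq_pow_val b (2 * n) hb j]
  have hfbij : Function.Bijective f := by
    refine (Fintype.bijective_iff_surjective_and_card f).2 ⟨hfsurj, ?_⟩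
    rw [Fintype.card_prod, ZMod.card, ZMod.card, hcard]
    ring
  -- the order of a is exactly m
  have hom : orderOf a = m := by
    have hdvd : orderOf a ∣ m := orderOf_dvd_of_pow_eq_one ha
    have hpos : 0 < orderOf a := orderOf_pos a
    by_contra hne
    have hlt : orderOf a < m := lt_of_le_of_ne (Nat.le_of_dvd (by omega) hdvd) hne
    have h1 : f ((orderOf a : ZMod m), 0) = f (0, 0) := by
      show a ^ ((orderOf a : ZMod m)).val * b ^ ((0 : ZMod (2 * n))).val
        = a ^ ((0 : ZMod m)).val * b ^ ((0 : ZMod (2 * n))).val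
      simp [ZMod.val_natCast_of_lt hlt, pow_orderOf_eq_one]
    have h2 := hfbij.injective h1
    have h3 : (orderOf a : ZMod m) = 0 := congrArg Prod.fst h2
    have h4 := congrArg ZMod.val h3
    rw [ZMod.val_natCast_of_lt hlt, ZMod.val_zero] at h4
    omega
  have hzone : ∀ z : ℤ, a ^ z = 1 ↔ (m : ℤ) ∣ z := by
    intro z
    rw [← hom]
    exact orderOf_dvd_iff_zpow_eq_one.symm
  -- the commutation criterion
  have hcommiff : ∀ i j k l : ℤ, ((a ^ i * b ^ j) * (a ^ k * b ^ l)
      = (a ^ k * b ^ l) * (a ^ i * b ^ j)) ↔ (m : ℤ) ∣ (i + eps j * k - (k + eps l * i)) := by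
    intro i j k l
    rw [hmul' i j k l, hmul' k l i j, add_comm l j]
    constructor
    · intro h
      have h2 : a ^ (i + eps j * k) = a ^ (k + eps l * i) := mul_right_cancel h
      have h3 : a ^ (i + eps j * k - (k + eps l * i)) = 1 := by
        rw [zpow_sub, h2, mul_inv_cancel]
      exact (hzone _).1 h3
    · intro h
      have h3 : a ^ (i + eps j * k - (k + eps l * i)) = 1 := (hzone _).2 h
      rw [zpow_sub, mul_inv_eq_one] at h3
      rw [h3]
  -- the centre criterion
  have hZiff : ∀ i j : ℤ, (a ^ i * b ^ j ∈ Subgroup.center G) ↔ (Even j ∧ (m : ℤ) ∣ 2 * i) := by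
    intro i j
    have e0 : eps 0 = 1 := heps_even 0 Even.zero
    have e1 : eps 1 = -1 := heps_odd 1 (by decide)
    constructor
    · intro hmem
      have hca := Subgroup.mem_center_iff.1 hmem a
      have hcb := Subgroup.mem_center_iff.1 hmem b
      have hevj : Even j := by
        by_contra hodd
        have hcx : (a ^ (1:ℤ) * b ^ (0:ℤ)) * (a ^ i * b ^ j)
            = (a ^ i * b ^ j) * (a ^ (1:ℤ) * b ^ (0:ℤ)) := by
          simpa using hca
        have hd := (hcommiff 1 0 i j).1 hcx
        rw [e0, heps_odd j hodd] at hd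
        have hd2 : (m : ℤ) ∣ 2 := by
          have : (1 + 1 * i - (i + -1 * 1)) = 2 := by ring
          rwa [this] at hd
        have := Int.le_of_dvd (by norm_num) hd2
        omega
      refine ⟨hevj, ?_⟩
      have hcx : (a ^ (0:ℤ) * b ^ (1:ℤ)) * (a ^ i * b ^ j)
          = (a ^ i * b ^ j) * (a ^ (0:ℤ) * b ^ (1:ℤ)) := by
        simpa using hcb
      have hd := (hcommiff 0 1 i j).1 hcx
      rw [e1, heps_even j hevj] at hd
      have : (0 + -1 * i - (i + 1 * 0)) = -(2 * i) := by ring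
      rw [this, dvd_neg] at hd
      exact hd
    · rintro ⟨hevj, hdvd⟩
      apply hcen
      · show a * (a ^ i * b ^ j) = (a ^ i * b ^ j) * a
        have hcx := (hcommiff 1 0 i j).2 (by
          rw [e0, heps_even j hevj]
          have : (1 + 1 * i - (i + 1 * 1)) = 0 := by ring
          rw [this]
          exact dvd_zero _)
        simpa using hcx
      · show b * (a ^ i * b ^ j) = (a ^ i * b ^ j) * b
        have hcx := (hcommiff 0 1 i j).2 (by
          rw [e1, heps_even j hevj]
          have : (0 + -1 * i - (i + 1 * 0)) = -(2 * i) := by ring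
          rw [this, dvd_neg]
          exact hdvd)
        simpa using hcx
  -- coordinates of elements
  set e : (ZMod m × ZMod (2 * n)) ≃ G := Equiv.ofBijective f hfbij with he
  have hfz : ∀ p : ZMod m × ZMod (2 * n), f p = a ^ ((p.1.val : ℤ)) * b ^ ((p.2.val : ℤ)) := by
    intro p
    show a ^ (p.1.val) * b ^ (p.2.val) = _
    rw [zpow_natCast, zpow_natCast]
  have hvz : ∀ g : G, g = a ^ (((e.symm g).1.val : ℤ)) * b ^ (((e.symm g).2.val : ℤ)) := by
    intro g
    conv_lhs => rw [← e.apply_symm_apply g]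
    exact hfz (e.symm g)
  have hnc : ∀ x : {g : G // g ∉ Subgroup.center G},
      ¬ (Even ((e.symm (x:G)).2.val) ∧ (m:ℤ) ∣ 2 * (((e.symm (x:G)).1.val : ℤ))) := by
    intro x hx
    apply x.2
    have hxv := hvz (x:G)
    rw [hxv]
    exact (hZiff _ _).2 ⟨(Int.even_coe_nat _).2 hx.1, hx.2⟩
  -- the main generic computation
  have key : ∀ (m'' : ℕ), 0 < m'' → ∀ (hdvd : m'' ∣ m),
      (∀ d : ℤ, ((m:ℤ) ∣ 2 * d ↔ (m'':ℤ) ∣ d)) →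
      graphEnergy (commGraph G)
        = 2 * ((2 * (m:ℝ) * n - ((m / m'' : ℕ) : ℝ) * n) - ((m'':ℝ) + 1)) := by
    intro m'' hm''pos hdvd hiff
    haveI : NeZero m'' := ⟨hm''pos.ne'⟩
    set q : {g : G // g ∉ Subgroup.center G} → Option (ZMod m'') := fun v =>
      if Even ((e.symm (v:G)).2.val) then none
      else some (ZMod.castHom hdvd (ZMod m'') (e.symm (v:G)).1) with hq
    have hker : ∀ i k : ZMod m, (ZMod.castHom hdvd (ZMod m'') i = ZMod.castHom hdvd (ZMod m'') k
        ↔ (m'' : ℤ) ∣ ((i.val:ℤ) - (k.val:ℤ))) := by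
      intro i k
      rw [ZMod.castHom_apply, ZMod.castHom_apply, ← ZMod.natCast_val, ← ZMod.natCast_val,
        ← Int.cast_natCast, ← Int.cast_natCast (R := ZMod m''), ZMod.intCast_eq_intCast_iff,
        Int.modEq_iff_dvd]
      exact dvd_sub_comm
    have hAdjq : ∀ x y, (commGraph G).Adj x y ↔ x ≠ y ∧ q x = q y := by
      intro x y
      show (x ≠ y ∧ (x:G) * (y:G) = (y:G) * (x:G)) ↔ _
      apply and_congr_right
      intro _
      have hx := hvz (x:G)
      have hy := hvz (y:G)
      rw [hx, hy, hcommiff]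
      set iv : ℤ := ((e.symm (x:G)).1.val : ℤ)
      set jv : ℕ := (e.symm (x:G)).2.val
      set kv : ℤ := ((e.symm (y:G)).1.val : ℤ)
      set lv : ℕ := (e.symm (y:G)).2.val
      rcases Nat.even_or_odd jv with hj | hj <;> rcases Nat.even_or_odd lv with hl | hl
      · -- both even
        rw [heps_even _ ((Int.even_coe_nat _).2 hj), heps_even _ ((Int.even_coe_nat _).2 hl)]
        have h3 : q x = none := by simp only [hq]; rw [if_pos hj]
        have h4 : q y = none := by simp only [hq]; rw [if_pos hl]
        refine iff_of_true ?_ (h3.trans h4.symm)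
        have hz : iv + 1 * kv - (kv + 1 * iv) = 0 := by ring
        rw [hz]
        exact dvd_zero _
      · -- x even, y odd
        rw [heps_even _ ((Int.even_coe_nat _).2 hj),
          heps_odd _ (by rw [Int.even_coe_nat]; exact Nat.not_even_iff_odd.2 hl)]
        have h3 : q x = none := by simp only [hq]; rw [if_pos hj]
        have h4 : q y = some (ZMod.castHom hdvd (ZMod m'') (e.symm (y:G)).1) := by
          simp only [hq]; rw [if_neg (Nat.not_even_iff_odd.2 hl)]
        refine iff_of_false ?_ (by rw [h3, h4]; simp)
        intro hdvd2
        have hz : iv + 1 * kv - (kv + -1 * iv) = 2 * iv := by ring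
        rw [hz] at hdvd2
        exact hnc x ⟨hj, hdvd2⟩
      · -- x odd, y even
        rw [heps_odd _ (by rw [Int.even_coe_nat]; exact Nat.not_even_iff_odd.2 hj),
          heps_even _ ((Int.even_coe_nat _).2 hl)]
        have h3 : q x = some (ZMod.castHom hdvd (ZMod m'') (e.symm (x:G)).1) := by
          simp only [hq]; rw [if_neg (Nat.not_even_iff_odd.2 hj)]
        have h4 : q y = none := by simp only [hq]; rw [if_pos hl]
        refine iff_of_false ?_ (by rw [h3, h4]; simp)
        intro hdvd2
        have hz : iv + -1 * kv - (kv + 1 * iv) = -(2 * kv) := by ring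
        rw [hz, dvd_neg] at hdvd2
        exact hnc y ⟨hl, hdvd2⟩
      · -- both odd
        rw [heps_odd _ (by rw [Int.even_coe_nat]; exact Nat.not_even_iff_odd.2 hj),
          heps_odd _ (by rw [Int.even_coe_nat]; exact Nat.not_even_iff_odd.2 hl)]
        have h3 : q x = some (ZMod.castHom hdvd (ZMod m'') (e.symm (x:G)).1) := by
          simp only [hq]; rw [if_neg (Nat.not_even_iff_odd.2 hj)]
        have h4 : q y = some (ZMod.castHom hdvd (ZMod m'') (e.symm (y:G)).1) := by
          simp only [hq]; rw [if_neg (Nat.not_even_iff_odd.2 hl)]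
        have hz : iv + -1 * kv - (kv + -1 * iv) = 2 * (iv - kv) := by ring
        rw [hz, hiff (iv - kv), h3, h4, Option.some_inj]
        exact (hker _ _).symm
    have hqsurj : Function.Surjective q := by
      rintro (_ | c)
      · -- colour `none` is attained by `a`
        have hanc : a ∉ Subgroup.center G := by
          intro hmem
          have hmem2 : a ^ (1:ℤ) * b ^ (0:ℤ) ∈ Subgroup.center G := by simpa using hmem
          obtain ⟨-, hdvd2⟩ := (hZiff 1 0).1 hmem2
          have hdvd3 : (m:ℤ) ∣ 2 := by simpa using hdvd2
          have h2 : (m:ℤ) ≤ 2 := Int.le_of_dvd (by norm_num) hdvd3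
          omega
        refine ⟨⟨a, hanc⟩, ?_⟩
        have hcoord : e.symm a = ((1 : ZMod m), (0 : ZMod (2 * n))) := by
          apply e.injective
          rw [e.apply_symm_apply]
          show a = a ^ ((1 : ZMod m)).val * b ^ ((0 : ZMod (2 * n))).val
          rw [ZMod.val_one, ZMod.val_zero, pow_one, pow_zero, mul_one]
        simp only [hq, hcoord]
        rw [if_pos (by rw [ZMod.val_zero]; exact Even.zero)]
      · -- colour `some c`
        set x : G := f ((c.val : ZMod m), (1 : ZMod (2 * n))) with hxdef
        have hxval : x = a ^ ((((c.val : ZMod m)).val : ℤ)) * b ^ (((1 : ZMod (2*n)).val : ℤ)) :=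
          hfz _
        have hxnc : x ∉ Subgroup.center G := by
          intro hmem
          rw [hxval] at hmem
          obtain ⟨hev, -⟩ := (hZiff _ _).1 hmem
          rw [ZMod.val_one] at hev
          norm_num at hev
        refine ⟨⟨x, hxnc⟩, ?_⟩
        have hcoord : e.symm x = ((c.val : ZMod m), (1 : ZMod (2 * n))) := by
          apply e.injective
          rw [e.apply_symm_apply]
          rfl
        simp only [hq, hcoord]
        rw [if_neg (by rw [ZMod.val_one]; norm_num)]
        congr 1
        have h1 : ZMod.castHom hdvd (ZMod m'') ((c.val : ZMod m)) = ((c.val : ℕ) : ZMod m'') :=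
          map_natCast _ _
        rw [h1]
        exact ZMod.natCast_rightInverse c
    -- apply the spectral computation
    have hEn := energy_clique_partition (commGraph G) q hqsurj hAdjq
    rw [hEn]
    have hcardC : Fintype.card (Option (ZMod m'')) = m'' + 1 := by
      rw [Fintype.card_option, ZMod.card]
    have hcardZ : Fintype.card {g : G // g ∈ Subgroup.center G} = (m / m'') * n := by
      have hEquivCond : ∀ p : ZMod m × ZMod (2 * n),
          ((m'':ℤ) ∣ ((p.1.val : ℤ)) ∧ Even p.2.val) ↔ (e p ∈ Subgroup.center G) := by
        intro p
        show _ ↔ (f p ∈ _)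
        rw [hfz p, hZiff]
        constructor
        · rintro ⟨h1, h2⟩
          exact ⟨(Int.even_coe_nat _).2 h2, (hiff _).2 h1⟩
        · rintro ⟨h1, h2⟩
          exact ⟨(hiff _).1 h2, (Int.even_coe_nat _).1 h1⟩
      have hEq : Fintype.card {g : G // g ∈ Subgroup.center G}
          = Fintype.card {p : ZMod m × ZMod (2 * n) // (m'':ℤ) ∣ ((p.1.val : ℤ)) ∧ Even p.2.val} :=
        (Fintype.card_congr (Equiv.subtypeEquiv e hEquivCond)).symm
      rw [hEq]
      have hprod : Fintype.card {p : ZMod m × ZMod (2 * n) // (m'':ℤ) ∣ ((p.1.val : ℤ)) ∧ Even p.2.val}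
          = Fintype.card ({i : ZMod m // (m'':ℤ) ∣ ((i.val : ℤ))} × {l : ZMod (2 * n) // Even l.val}) :=
        Fintype.card_congr (Equiv.subtypeProdEquivProd
          (p := fun i : ZMod m => (m'':ℤ) ∣ ((i.val : ℤ)))
          (q := fun l : ZMod (2 * n) => Even l.val))
      rw [hprod, Fintype.card_prod]
      have hc1 : Fintype.card {i : ZMod m // (m'':ℤ) ∣ ((i.val : ℤ))} = m / m'' := by
        rw [Fintype.card_congr (Equiv.subtypeEquivRight
          (fun i : ZMod m => (Int.natCast_dvd_natCast (m := m'') (n := i.val))))]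
        exact card_val_dvd m m'' hm''pos hdvd
      have hc2 : Fintype.card {l : ZMod (2 * n) // Even l.val} = n := by
        rw [Fintype.card_congr (Equiv.subtypeEquivRight
          (fun l : ZMod (2 * n) => (even_iff_two_dvd (a := l.val))))]
        rw [card_val_dvd (2 * n) 2 (by norm_num) ⟨n, rfl⟩]
        omega
      rw [hc1, hc2]
    have hcardV : Fintype.card {g : G // g ∉ Subgroup.center G}
        = 2 * m * n - (m / m'') * n := by
      rw [Fintype.card_subtype_compl, hcardZ, hcard]
    rw [hcardV, hcardC]
    have hle : (m / m'') * n ≤ 2 * m * n := by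
      have h1 : m / m'' ≤ m := Nat.div_le_self m m''
      have h2 : m ≤ 2 * m := by omega
      exact Nat.mul_le_mul (h1.trans h2) (le_refl n)
    rw [Nat.cast_sub hle]
    push_cast
    ring
  constructor
  · intro hodd
    have hiffodd : ∀ d : ℤ, ((m:ℤ) ∣ 2 * d ↔ (m:ℤ) ∣ d) := by
      intro d
      constructor
      · intro h
        have hcop : IsCoprime (m:ℤ) 2 :=
          Nat.isCoprime_iff_coprime.2 (Nat.coprime_two_right.2 hodd)
        exact hcop.dvd_of_dvd_mul_left h
      · intro h
        exact Dvd.dvd.mul_left h 2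
    rw [key m (by omega) dvd_rfl hiffodd, Nat.div_self (by omega : 0 < m)]
    push_cast
    ring
  · intro heven
    obtain ⟨m', hm'⟩ := heven
    have hm2 : m = 2 * m' := by omega
    have hdvd : m' ∣ m := ⟨2, by omega⟩
    have hiffeven : ∀ d : ℤ, ((m:ℤ) ∣ 2 * d ↔ (m':ℤ) ∣ d) := by
      intro d
      have hmz : (m:ℤ) = 2 * (m':ℤ) := by exact_mod_cast hm2
      rw [hmz]
      exact mul_dvd_mul_iff_left (by norm_num : (2:ℤ) ≠ 0)
    have hdiv : m / m' = 2 := by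
      rw [hm2, mul_comm 2 m', Nat.mul_div_cancel_left _ (by omega : 0 < m')]
    rw [key m' (by omega) hdvd hiffeven, hdiv]
    have hmr : (m:ℝ) = 2 * m' := by exact_mod_cast hm2
    rw [hmr]
    push_cast
    ring
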